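/- Let (M, Σ, μ, T) be a measure-preserving system on a metric space (M, d) whose σ-algebra contains all open balls, with T continuous at a point x, every open ball around x of positive measure, and some set D of positive measure with inf{d(T(x), m) : m ∈ D} > 0. Then there exists ε > 0 such that (M, Σ, μ, T) is not ε-congruent to any generalised Bernoulli process (i.i.d. process with arbitrary, not necessarily finite, outcome space contained in M). -/

import Mathlib

open MeasureTheory Set
open scoped ENNReal

def IsIso {M Ω : Type*} [MeasurableSpace M] [MeasurableSpace Ω]
    (μ : Measure M) (ν : Measure Ω) (T : M → M) (S : Ω → Ω) (φ : M → Ω) : Prop :=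
  ∃ (Mh : Set M) (Ωh : Set Ω), MeasurableSet Mh ∧ MeasurableSet Ωh ∧
    μ Mhᶜ = 0 ∧ ν Ωhᶜ = 0 ∧ Set.MapsTo T Mh Mh ∧ Set.MapsTo S Ωh Ωh ∧
    Set.BijOn φ Mh Ωh ∧
    (∀ A : Set M, MeasurableSet A → A ⊆ Mh → MeasurableSet (φ '' A) ∧ ν (φ '' A) = μ A) ∧
    (∀ B : Set Ω, MeasurableSet B → B ⊆ Ωh → MeasurableSet (Mh ∩ φ ⁻¹' B)) ∧
    (∀ m ∈ Mh, φ (T m) = S (φ m))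

theorem stmt12 {M : Type*} [MetricSpace M] [MeasurableSpace M]
    (μ : Measure M) [IsProbabilityMeasure μ]
    (hballs : ∀ (x : M) (r : ℝ), MeasurableSet (Metric.ball x r))
    (T : M → M) (hTbij : Function.Bijective T) (hTmeas : Measurable T)
    (hTpres : ∀ A : Set M, MeasurableSet A → μ (T '' A) = μ A)
    (x : M) (hcont : ContinuousAt T x)
    (hx : ∀ r : ℝ, 0 < r → 0 < μ (Metric.ball x r))
    (D : Set M) (hD : MeasurableSet D) (hDpos : 0 < μ D)
    (hDdist : 0 < Metric.infDist (T x) D) :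
    ∃ ε : ℝ, 0 < ε ∧
      ¬ ∃ (ρ : Measure M) (_ : IsProbabilityMeasure ρ) (ν : Measure (ℤ → M))
          (_ : IsProbabilityMeasure ν) (φ : M → (ℤ → M)),
        (∀ (F : Finset ℤ) (A : ℤ → Set M), (∀ i, MeasurableSet (A i)) →
          ν {ω | ∀ i ∈ F, ω i ∈ A i} = ∏ i ∈ F, ρ (A i)) ∧
        IsIso μ ν T (fun ω t => ω (t + 1)) φ ∧
        μ {m : M | ε ≤ dist m (φ m 0)} < ENNReal.ofReal ε := by
  classical
  set δ := Metric.infDist (T x) D with hδdef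
  obtain ⟨r₀, hr₀pos, hr₀⟩ : ∃ r₀ > 0, ∀ y : M, dist y x < r₀ → dist (T y) (T x) < δ / 3 := by
    rcases Metric.continuousAt_iff.mp hcont (δ / 3) (by positivity) with ⟨r₀, hr₀, h⟩
    exact ⟨r₀, hr₀, fun y hy => h hy⟩
  set a := μ (Metric.ball x (r₀ / 4)) with ha
  set b := μ D with hb
  have hapos : 0 < a := hx _ (by positivity)
  have hane : a ≠ ∞ := measure_ne_top μ _
  have hbne : b ≠ ∞ := measure_ne_top μ _
  have ha2ne : a / 2 ≠ ∞ := by simp [ENNReal.div_eq_top, hane]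
  have hb2ne : b / 2 ≠ ∞ := by simp [ENNReal.div_eq_top, hbne]
  set a2 := (a / 2).toReal with ha2
  set b2 := (b / 2).toReal with hb2
  have ha2pos : 0 < a2 := ENNReal.toReal_pos (by simp [ENNReal.div_eq_zero_iff, hapos.ne']) ha2ne
  have hb2pos : 0 < b2 := ENNReal.toReal_pos (by simp [ENNReal.div_eq_zero_iff, hDpos.ne']) hb2ne
  set ε := min (min (δ / 3) (r₀ / 4)) (min a2 (min b2 (a2 * b2 / 8))) with hεdef
  have hεpos : 0 < ε := by
    refine lt_min (lt_min (by positivity) (by positivity)) (lt_min ha2pos (lt_min hb2pos (by positivity)))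
  have hεδ : ε ≤ δ / 3 := le_trans (min_le_left _ _) (min_le_left _ _)
  have hεr : ε ≤ r₀ / 4 := le_trans (min_le_left _ _) (min_le_right _ _)
  have hεa2 : ε ≤ a2 := le_trans (min_le_right _ _) (min_le_left _ _)
  have hεb2 : ε ≤ b2 := le_trans (min_le_right _ _) (le_trans (min_le_right _ _) (min_le_left _ _))
  have hεab : ε ≤ a2 * b2 / 8 :=
    le_trans (min_le_right _ _) (le_trans (min_le_right _ _) (min_le_right _ _))
  have hεa : ENNReal.ofReal ε ≤ a / 2 := by
    rw [← ENNReal.ofReal_toReal ha2ne]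
    exact ENNReal.ofReal_le_ofReal hεa2
  have hεb : ENNReal.ofReal ε ≤ b / 2 := by
    rw [← ENNReal.ofReal_toReal hb2ne]
    exact ENNReal.ofReal_le_ofReal hεb2
  refine ⟨ε, hεpos, ?_⟩
  rintro ⟨ρ, hρ, ν, hν, φ, hIndep, hIso, hclose⟩
  obtain ⟨Mh, Ωh, hMhm, hΩhm, hMhc, hΩhc, hTMaps, hSMaps, hbij, hpush, hpre, hcomm⟩ := hIso
  set E := {m : M | ε ≤ dist m (φ m 0)} with hEdef
  have hE : μ E ≤ ENNReal.ofReal ε := hclose.le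
  -- pushing forward subsets of Mh does not increase measure
  have push_le : ∀ S : Set M, S ⊆ Mh → ν (φ '' S) ≤ μ S := by
    intro S hS
    have h1 : S ⊆ toMeasurable μ S ∩ Mh := subset_inter (subset_toMeasurable _ _) hS
    calc ν (φ '' S) ≤ ν (φ '' (toMeasurable μ S ∩ Mh)) := measure_mono (image_mono h1)
      _ = μ (toMeasurable μ S ∩ Mh) :=
        (hpush _ ((measurableSet_toMeasurable μ S).inter hMhm) inter_subset_right).2
      _ ≤ μ (toMeasurable μ S) := measure_mono inter_subset_left
      _ = μ S := measure_toMeasurable S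
  have hTpre : μ (T ⁻¹' E) ≤ μ E := by
    calc μ (T ⁻¹' E) ≤ μ (T ⁻¹' toMeasurable μ E) :=
        measure_mono (preimage_mono (subset_toMeasurable _ _))
      _ = μ (T '' (T ⁻¹' toMeasurable μ E)) :=
        (hTpres _ (hTmeas (measurableSet_toMeasurable _ _))).symm
      _ = μ (toMeasurable μ E) := by rw [Set.image_preimage_eq _ hTbij.surjective]
      _ = μ E := measure_toMeasurable E
  set A₀ := Metric.ball x (r₀ / 2) with hA₀def
  set A₁ := (Metric.ball (T x) (2 * δ / 3))ᶜ with hA₁def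
  have hA₀m : MeasurableSet A₀ := hballs _ _
  have hA₁m : MeasurableSet A₁ := (hballs _ _).compl
  -- single-coordinate distributions
  have hcoord : ∀ A : Set M, MeasurableSet A → ν {ω | ω 0 ∈ A} = ρ A := by
    intro A hA
    have := hIndep {0} (fun _ => A) (fun _ => hA)
    simpa using this
  -- lower bound for ρ A₀
  have hρ0 : a / 2 ≤ ρ A₀ := by
    have hsub : φ '' (Metric.ball x (r₀ / 4) ∩ Mh) ⊆ {ω | ω 0 ∈ A₀} ∪ φ '' (E ∩ Mh) := by
      rintro ω ⟨m, ⟨hmball, hmMh⟩, rfl⟩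
      by_cases hmE : m ∈ E
      · exact Or.inr ⟨m, ⟨hmE, hmMh⟩, rfl⟩
      · left
        have h1 : dist m (φ m 0) < ε := lt_of_not_ge hmE
        have h2 : dist m x < r₀ / 4 := hmball
        have : dist (φ m 0) x ≤ dist (φ m 0) m + dist m x := dist_triangle _ _ _
        rw [dist_comm (φ m 0) m] at this
        simp only [A₀, Metric.mem_ball, mem_setOf_eq]
        have hεr' : ε ≤ r₀ / 4 := hεr
        calc dist (φ m 0) x ≤ dist m (φ m 0) + dist m x := this
          _ < ε + r₀ / 4 := by linarith
          _ ≤ r₀ / 2 := by linarith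
    have hG : a ≤ μ (Metric.ball x (r₀ / 4) ∩ Mh) := by
      have : Metric.ball x (r₀ / 4) ⊆ (Metric.ball x (r₀ / 4) ∩ Mh) ∪ Mhᶜ := by
        intro m hm
        by_cases h : m ∈ Mh
        · exact Or.inl ⟨hm, h⟩
        · exact Or.inr h
      calc a ≤ μ ((Metric.ball x (r₀ / 4) ∩ Mh) ∪ Mhᶜ) := measure_mono this
        _ ≤ μ (Metric.ball x (r₀ / 4) ∩ Mh) + μ Mhᶜ := measure_union_le _ _
        _ = μ (Metric.ball x (r₀ / 4) ∩ Mh) := by rw [hMhc, add_zero]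
    have hpsh := (hpush _ ((hballs x (r₀ / 4)).inter hMhm) inter_subset_right).2
    have hchain : a ≤ ρ A₀ + ENNReal.ofReal ε := by
      calc a ≤ μ (Metric.ball x (r₀ / 4) ∩ Mh) := hG
        _ = ν (φ '' (Metric.ball x (r₀ / 4) ∩ Mh)) := hpsh.symm
        _ ≤ ν ({ω | ω 0 ∈ A₀} ∪ φ '' (E ∩ Mh)) := measure_mono hsub
        _ ≤ ν {ω | ω 0 ∈ A₀} + ν (φ '' (E ∩ Mh)) := measure_union_le _ _
        _ ≤ ρ A₀ + μ (E ∩ Mh) := by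
            rw [hcoord A₀ hA₀m]
            exact add_le_add_right (push_le _ inter_subset_right) _
        _ ≤ ρ A₀ + ENNReal.ofReal ε :=
            add_le_add_right (le_trans (measure_mono inter_subset_left) hE) _
    have h2 : a / 2 + a / 2 ≤ ρ A₀ + a / 2 := by
      rw [ENNReal.add_halves]
      exact le_trans hchain (add_le_add_right hεa _)
    exact (ENNReal.add_le_add_iff_right ha2ne).mp h2
  -- lower bound for ρ A₁
  have hρ1 : b / 2 ≤ ρ A₁ := by
    have hsub : φ '' (D ∩ Mh) ⊆ {ω | ω 0 ∈ A₁} ∪ φ '' (E ∩ Mh) := by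
      rintro ω ⟨m, ⟨hmD, hmMh⟩, rfl⟩
      by_cases hmE : m ∈ E
      · exact Or.inr ⟨m, ⟨hmE, hmMh⟩, rfl⟩
      · left
        have h1 : dist m (φ m 0) < ε := lt_of_not_ge hmE
        have h2 : δ ≤ dist (T x) m := Metric.infDist_le_dist_of_mem hmD
        simp only [A₁, mem_compl_iff, Metric.mem_ball, mem_setOf_eq, not_lt]
        have htri : dist (T x) m ≤ dist (T x) (φ m 0) + dist (φ m 0) m := dist_triangle _ _ _
        rw [dist_comm (φ m 0) m] at htri
        rw [dist_comm (φ m 0) (T x)]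
        have hεδ' : ε ≤ δ / 3 := hεδ
        linarith
    have hG : b ≤ μ (D ∩ Mh) := by
      have : D ⊆ (D ∩ Mh) ∪ Mhᶜ := by
        intro m hm
        by_cases h : m ∈ Mh
        · exact Or.inl ⟨hm, h⟩
        · exact Or.inr h
      calc b ≤ μ ((D ∩ Mh) ∪ Mhᶜ) := measure_mono this
        _ ≤ μ (D ∩ Mh) + μ Mhᶜ := measure_union_le _ _
        _ = μ (D ∩ Mh) := by rw [hMhc, add_zero]
    have hpsh := (hpush _ (hD.inter hMhm) inter_subset_right).2
    have hchain : b ≤ ρ A₁ + ENNReal.ofReal ε := by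
      calc b ≤ μ (D ∩ Mh) := hG
        _ = ν (φ '' (D ∩ Mh)) := hpsh.symm
        _ ≤ ν ({ω | ω 0 ∈ A₁} ∪ φ '' (E ∩ Mh)) := measure_mono hsub
        _ ≤ ν {ω | ω 0 ∈ A₁} + ν (φ '' (E ∩ Mh)) := measure_union_le _ _
        _ ≤ ρ A₁ + μ (E ∩ Mh) := by
            rw [hcoord A₁ hA₁m]
            exact add_le_add_right (push_le _ inter_subset_right) _
        _ ≤ ρ A₁ + ENNReal.ofReal ε :=
            add_le_add_right (le_trans (measure_mono inter_subset_left) hE) _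
    have h2 : b / 2 + b / 2 ≤ ρ A₁ + b / 2 := by
      rw [ENNReal.add_halves]
      exact le_trans hchain (add_le_add_right hεb _)
    exact (ENNReal.add_le_add_iff_right hb2ne).mp h2
  -- the independence set
  set W := {ω : ℤ → M | ω 0 ∈ A₀ ∧ ω 1 ∈ A₁} with hWdef
  have hνW : ν W = ρ A₀ * ρ A₁ := by
    have h := hIndep {0, 1} (fun i => if i = 0 then A₀ else A₁)
      (fun i => by by_cases h : i = 0 <;> simp [h, hA₀m, hA₁m])
    have hset : {ω : ℤ → M | ∀ i ∈ ({0, 1} : Finset ℤ), ω i ∈ (if i = 0 then A₀ else A₁)} = W := by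
      ext ω
      simp [W]
    have hprod : (∏ i ∈ ({0, 1} : Finset ℤ), ρ (if i = 0 then A₀ else A₁)) = ρ A₀ * ρ A₁ := by
      rw [Finset.prod_pair (by norm_num)]
      norm_num
    rw [hset, hprod] at h
    exact h
  -- upper bound for ν W
  have hWsub : W ∩ Ωh ⊆ φ '' ((E ∪ T ⁻¹' E) ∩ Mh) := by
    rintro ω ⟨⟨h0, h1⟩, hΩ⟩
    obtain ⟨m, hmMh, rfl⟩ := hbij.surjOn hΩ
    refine ⟨m, ⟨?_, hmMh⟩, rfl⟩
    by_contra hmbad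
    simp only [mem_union, not_or, mem_preimage] at hmbad
    obtain ⟨hmE, hmTE⟩ := hmbad
    have hd1 : dist m (φ m 0) < ε := lt_of_not_ge hmE
    have hd2 : dist (T m) (φ (T m) 0) < ε := lt_of_not_ge hmTE
    have hφT : φ (T m) 0 = φ m 1 := by
      rw [hcomm m hmMh]
      norm_num
    have hmx : dist m x < r₀ := by
      have h0' : dist (φ m 0) x < r₀ / 2 := h0
      have : dist m x ≤ dist m (φ m 0) + dist (φ m 0) x := dist_triangle _ _ _
      have hεr' : ε ≤ r₀ / 4 := hεr
      linarith
    have hTmx : dist (T m) (T x) < δ / 3 := hr₀ m hmx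
    have h1' : 2 * δ / 3 ≤ dist (φ m 1) (T x) := by
      have := h1
      simp only [A₁, mem_compl_iff, Metric.mem_ball, not_lt] at this
      exact this
    have : dist (φ m 1) (T x) ≤ dist (φ m 1) (T m) + dist (T m) (T x) := dist_triangle _ _ _
    rw [dist_comm (φ m 1) (T m)] at this
    rw [hφT] at hd2
    have hεδ' : ε ≤ δ / 3 := hεδ
    linarith
  have hWle : ν W ≤ ENNReal.ofReal ε + ENNReal.ofReal ε := by
    calc ν W ≤ ν ((W ∩ Ωh) ∪ Ωhᶜ) := by
          refine measure_mono ?_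
          intro ω hω
          by_cases h : ω ∈ Ωh
          · exact Or.inl ⟨hω, h⟩
          · exact Or.inr h
      _ ≤ ν (W ∩ Ωh) + ν Ωhᶜ := measure_union_le _ _
      _ = ν (W ∩ Ωh) := by rw [hΩhc, add_zero]
      _ ≤ ν (φ '' ((E ∪ T ⁻¹' E) ∩ Mh)) := measure_mono hWsub
      _ ≤ μ ((E ∪ T ⁻¹' E) ∩ Mh) := push_le _ inter_subset_right
      _ ≤ μ (E ∪ T ⁻¹' E) := measure_mono inter_subset_left
      _ ≤ μ E + μ (T ⁻¹' E) := measure_union_le _ _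
      _ ≤ ENNReal.ofReal ε + ENNReal.ofReal ε := add_le_add hE (le_trans hTpre hE)
  -- final contradiction
  have hfinal : a / 2 * (b / 2) ≤ ENNReal.ofReal ε + ENNReal.ofReal ε := by
    calc a / 2 * (b / 2) ≤ ρ A₀ * ρ A₁ := mul_le_mul' hρ0 hρ1
      _ = ν W := hνW.symm
      _ ≤ ENNReal.ofReal ε + ENNReal.ofReal ε := hWle
  have hlt : ENNReal.ofReal ε + ENNReal.ofReal ε < a / 2 * (b / 2) := by
    rw [← ENNReal.ofReal_add hεpos.le hεpos.le]
    have h1 : ε + ε ≤ a2 * b2 / 4 := by linarith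
    have h2 : ENNReal.ofReal (a2 * b2 / 4) < ENNReal.ofReal (a2 * b2) := by
      rw [ENNReal.ofReal_lt_ofReal_iff (by positivity)]
      have : 0 < a2 * b2 := by positivity
      linarith
    have h3 : ENNReal.ofReal (a2 * b2) = a / 2 * (b / 2) := by
      rw [ENNReal.ofReal_mul ha2pos.le, ENNReal.ofReal_toReal ha2ne, ENNReal.ofReal_toReal hb2ne]
    calc ENNReal.ofReal (ε + ε) ≤ ENNReal.ofReal (a2 * b2 / 4) := ENNReal.ofReal_le_ofReal h1
      _ < ENNReal.ofReal (a2 * b2) := h2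
      _ = a / 2 * (b / 2) := h3
  exact absurd hfinal (not_le.mpr hlt)
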